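/- Let G = (Φ, Σ, R, 𝒮) be a regular tree grammar and G' its subset-construction determinization (nonterminals of G' are subsets A' ⊆ Φ; a rule A' → x(B'₁,…,B'_k) is included in R' iff A' equals the set of all A ∈ Φ such that A → x(B₁,…,B_k) ∈ R for some B_j ∈ B'_j). Then for every nonterminal A ∈ Φ, every n ∈ ℕ, and every tree x: x ∈ L_n(G|A) if and only if there exists a nonterminal A' of G' with A ∈ A' and x ∈ L_n(G'|A'). -/
import Mathlib


structure Rule (N : Type) (α : Type) where
  lhs : N
  sym : α
  rhs : List N
deriving DecidableEq

inductive RTree (α : Type) where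
  | node : α → List (RTree α) → RTree α

def RTree.size {α : Type} : RTree α → Nat
  | .node _ ys => 1 + (ys.attach.map (fun y => RTree.size y.1)).sum
decreasing_by have := List.sizeOf_lt_of_mem y.2; simp only [RTree.node.sizeOf_spec]; omega

def RTree.children {α : Type} : RTree α → List (RTree α)
  | .node _ ys => ys

def RTree.root {α : Type} : RTree α → α
  | .node x _ => x

def RTree.dfs {α : Type} : RTree α → List (RTree α)
  | .node x ys => (ys.attach.map (fun y => RTree.dfs y.1)).flatten ++ [.node x ys]
decreasing_by have := List.sizeOf_lt_of_mem y.2; simp only [RTree.node.sizeOf_spec]; omega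

inductive GenList {N α : Type} (R : Set (Rule N α)) :
    List (Rule N α) → List N → List (RTree α) → Prop where
  | nil : GenList R [] [] []
  | step {r : Rule N α} {rs : List (Rule N α)} {stack : List N}
      {ys ts : List (RTree α)} :
      r ∈ R →
      ys.length = r.rhs.length →
      GenList R rs (r.rhs ++ stack) (ys ++ ts) →
      GenList R (r :: rs) (r.lhs :: stack) (RTree.node r.sym ys :: ts)

def GenSeq {N α : Type} (R : Set (Rule N α)) (rs : List (Rule N α))
    (A : N) (t : RTree α) : Prop :=
  GenList R rs [A] [t]

def Lang {N α : Type} (R : Set (Rule N α)) (A : N) : Set (RTree α) :=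
  {t | ∃ rs, GenSeq R rs A t}

def LangN {N α : Type} (R : Set (Rule N α)) (A : N) (n : Nat) : Set (RTree α) :=
  {t ∈ Lang R A | t.size ≤ n}

def Deterministic {N α : Type} (R : Set (Rule N α)) : Prop :=
  ∀ r ∈ R, ∀ r' ∈ R, r.sym = r'.sym → r.rhs = r'.rhs → r = r'

def parse {N α : Type} [DecidableEq N] [DecidableEq α] (R : List (Rule N α)) :
    RTree α → Option (N × List (Rule N α))
  | RTree.node x ys => do
    let res ← ys.attach.mapM (fun y => parse R y.1)
    match R.find? (fun r => r.sym == x && r.rhs == res.map Prod.fst) with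
    | some r => some (r.lhs, r :: (res.map Prod.snd).flatten)
    | none => none
decreasing_by have := List.sizeOf_lt_of_mem y.2; simp only [RTree.node.sizeOf_spec]; omega

section Aux
variable {N α : Type}

inductive Gen (R : Set (Rule N α)) : N → RTree α → Prop where
  | node {r : Rule N α} {ys : List (RTree α)} (hr : r ∈ R)
      (hlen : ys.length = r.rhs.length)
      (h : ∀ i (h₁ : i < r.rhs.length) (h₂ : i < ys.length),
        Gen R (r.rhs.get ⟨i, h₁⟩) (ys.get ⟨i, h₂⟩)) :
      Gen R r.lhs (RTree.node r.sym ys)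

theorem forall₂_append_split {β : Type*} {r : N → β → Prop} :
    ∀ {l1 : List N} {m1 : List β} {l2 : List N} {m2 : List β},
      l1.length = m1.length → List.Forall₂ r (l1 ++ l2) (m1 ++ m2) →
      List.Forall₂ r l1 m1 ∧ List.Forall₂ r l2 m2
  | [], [], _, _, _, h => ⟨.nil, h⟩
  | a :: l1, b :: m1, l2, m2, hlen, h => by
    cases h with
    | cons hab h =>
      obtain ⟨h1, h2⟩ := forall₂_append_split (by simpa using hlen) h
      exact ⟨.cons hab h1, h2⟩

theorem GenList.append {R : Set (Rule N α)} {rs1 rs2 : List (Rule N α)}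
    {s1 s2 : List N} {t1 t2 : List (RTree α)}
    (h1 : GenList R rs1 s1 t1) (h2 : GenList R rs2 s2 t2) :
    GenList R (rs1 ++ rs2) (s1 ++ s2) (t1 ++ t2) := by
  induction h1 with
  | nil => simpa
  | step hr hlen h ih =>
    simp only [List.cons_append]
    exact GenList.step hr hlen (by simpa [List.append_assoc] using ih)

theorem genList_forall₂ {R : Set (Rule N α)} {rs : List (Rule N α)}
    {stack : List N} {ts : List (RTree α)} (h : GenList R rs stack ts) :
    List.Forall₂ (Gen R) stack ts := by
  induction h with
  | nil => exact .nil
  | @step r rs stack ys ts hr hlen h ih =>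
    obtain ⟨h1, h2⟩ := forall₂_append_split hlen.symm ih
    refine List.Forall₂.cons (Gen.node hr hlen ?_) h2
    intro i hi₁ hi₂
    exact h1.get hi₁ hi₂

theorem gen_genSeq {R : Set (Rule N α)} {A : N} {t : RTree α}
    (h : Gen R A t) : ∃ rs, GenSeq R rs A t := by
  induction h with
  | @node r ys hr hlen h ih =>
    suffices hs : ∃ rs, GenList R rs r.rhs ys by
      obtain ⟨rs, hs⟩ := hs
      exact ⟨r :: rs, GenList.step hr hlen (by simpa using hs)⟩
    clear hr h
    induction ys generalizing r with
    | nil =>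
      have : r.rhs = [] := List.length_eq_zero_iff.mp (by simpa using hlen.symm)
      exact ⟨[], this ▸ GenList.nil⟩
    | cons y ys ihy =>
      match hr : r.rhs with
      | [] => simp [hr] at hlen
      | B :: Bs =>
        have hlen' : ys.length = Bs.length := by simpa [hr] using hlen
        obtain ⟨rs1, h1⟩ := ih 0 (by simp [hr]) (by simp)
        obtain ⟨rs2, h2⟩ := ihy (r := ⟨r.lhs, r.sym, Bs⟩) hlen'
          (fun i hi₁ hi₂ => by
            have := ih (i + 1) (by simp [hr]; omega) (by simp; omega)
            simpa [hr] using this)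
        have h1' : GenList R rs1 [r.rhs.get ⟨0, by simp [hr]⟩] [y] := h1
        have := GenList.append h1' h2
        exact ⟨rs1 ++ rs2, by simpa [hr] using this⟩
end Aux
section Aux2
variable {N alpha : Type} {R : Set (Rule N alpha)} {R' : Set (Rule (Set N) alpha)}
variable (hR' : ∀ r' : Rule (Set N) alpha, r' ∈ R' ↔
      (r'.lhs = {A | ∃ Bs : List N, Rule.mk A r'.sym Bs ∈ R ∧
          List.Forall₂ (fun (B : N) (B' : Set N) => B ∈ B') Bs r'.rhs} ∧
        r'.lhs.Nonempty))

include hR'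

theorem gen_forward {A : N} {t : RTree alpha} (hg : Gen R A t) :
    ∃ A' : Set N, A ∈ A' ∧ Gen R' A' t := by
  induction hg with
  | @node r ys hr hlen h ih =>
    let Bs' : List (Set N) := List.ofFn (fun i : Fin r.rhs.length =>
      (ih i i.2 (Nat.lt_of_lt_of_eq i.2 hlen.symm)).choose)
    have hBs'len : Bs'.length = r.rhs.length := by simp [Bs']
    have hBs'get : ∀ i (h₁ : i < r.rhs.length) (h₂ : i < Bs'.length),
        Bs'.get ⟨i, h₂⟩ = (ih i h₁ (Nat.lt_of_lt_of_eq h₁ hlen.symm)).choose := by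
      intro i h₁ h₂; simp [Bs']
    set A' : Set N := {A | ∃ Bs : List N, Rule.mk A r.sym Bs ∈ R ∧
        List.Forall₂ (fun (B : N) (B' : Set N) => B ∈ B') Bs Bs'} with hA'
    have hmem : r.lhs ∈ A' := by
      refine ⟨r.rhs, hr, List.forall₂_of_length_eq_of_get hBs'len.symm ?_⟩
      intro i h₁ h₂
      rw [hBs'get i h₁ h₂]
      exact (ih i h₁ (Nat.lt_of_lt_of_eq h₁ hlen.symm)).choose_spec.1
    have hrule : (⟨A', r.sym, Bs'⟩ : Rule (Set N) alpha) ∈ R' :=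
      (hR' _).mpr ⟨rfl, ⟨r.lhs, hmem⟩⟩
    refine ⟨A', hmem, ?_⟩
    have := Gen.node (r := (⟨A', r.sym, Bs'⟩ : Rule (Set N) alpha)) hrule
      (by simpa [hBs'len] using hlen)
      (fun i h₁ h₂ => by
        have h₁' : i < r.rhs.length := by omega
        rw [hBs'get i h₁' h₁]
        exact (ih i h₁' (Nat.lt_of_lt_of_eq h₁' hlen.symm)).choose_spec.2)
    exact this

theorem gen_backward {A' : Set N} {t : RTree alpha} (hg : Gen R' A' t) :
    ∀ A ∈ A', Gen R A t := by
  induction hg with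
  | @node r' ys hr' hlen h ih =>
    intro A hA
    obtain ⟨hlhs, -⟩ := (hR' r').mp hr'
    rw [hlhs] at hA
    obtain ⟨Bs, hrule, hf⟩ := hA
    have hBslen : Bs.length = r'.rhs.length := hf.length_eq
    exact Gen.node (r := ⟨A, r'.sym, Bs⟩) hrule (by simpa [hBslen] using hlen)
      (fun i h₁ h₂ => by
        have h₁' : i < r'.rhs.length := by simp at h₁; omega
        exact ih i h₁' h₂ _ (hf.get h₁ h₁'))

end Aux2

theorem stmt2 {N alpha : Type} (R : Set (Rule N alpha)) (R' : Set (Rule (Set N) alpha))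
    (hR' : ∀ r' : Rule (Set N) alpha, r' ∈ R' ↔
      (r'.lhs = {A | ∃ Bs : List N, Rule.mk A r'.sym Bs ∈ R ∧
          List.Forall₂ (fun (B : N) (B' : Set N) => B ∈ B') Bs r'.rhs} ∧
        r'.lhs.Nonempty)) :
    ∀ (A : N) (n : Nat) (t : RTree alpha),
      t ∈ LangN R A n ↔ ∃ A' : Set N, A ∈ A' ∧ t ∈ LangN R' A' n := by
  intro A n t
  constructor
  · rintro ⟨⟨rs, hseq⟩, hsize⟩
    have hg : Gen R A t := by
      have := genList_forall₂ hseq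
      cases this with | cons h _ => exact h
    obtain ⟨A', hA, hg'⟩ := gen_forward hR' hg
    obtain ⟨rs', h'⟩ := gen_genSeq hg'
    exact ⟨A', hA, ⟨rs', h'⟩, hsize⟩
  · rintro ⟨A', hA, ⟨rs, hseq⟩, hsize⟩
    have hg' : Gen R' A' t := by
      have := genList_forall₂ hseq
      cases this with | cons h _ => exact h
    exact ⟨gen_genSeq (gen_backward hR' hg' A hA), hsize⟩
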